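/- With [i] := θ^{q^i} − θ ∈ A, d_0 := 1 and d_i := [i]·d_{i−1}^q for i ≥ 1: every d_i is nonzero with |d_i| = q^{i·q^i}; the series Σ_{i≥0} z^{q^i}/d_i converges for every z ∈ C, so it defines a function e_C : C → C; and e_C is 𝔽_q-linear (additive and 𝔽_q-homogeneous) and satisfies e_C(θz) = θ·e_C(z) + e_C(z)^q for all z ∈ C. -/

import Mathlib

/-- The Carlitz factorials: `d_0 = 1`, `d_i = [i] d_{i-1}^q` with `[i] = θ^{q^i} - θ`. -/
noncomputable def carlitzD {C : Type*} [Field C] (q : ℕ) (θ : C) : ℕ → C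
  | 0 => 1
  | i + 1 => (θ ^ q ^ (i + 1) - θ) * carlitzD q θ i ^ q

/-- Summability criterion in a complete ultrametric normed field. -/
lemma carlitz_summable_aux {C : Type*} [NormedField C] [CompleteSpace C] [IsUltrametricDist C]
    (f : ℕ → C) (h : ∀ ε > (0:ℝ), ∃ N, ∀ i ≥ N, ‖f i‖ < ε) : Summable f := by
  rw [summable_iff_vanishing_norm]
  intro ε hε
  obtain ⟨N, hN⟩ := h (ε/2) (by linarith)
  refine ⟨Finset.range N, fun t ht => ?_⟩
  have : ‖∑ i ∈ t, f i‖ ≤ ε/2 := by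
    refine IsUltrametricDist.norm_sum_le_of_forall_le_of_nonneg (by linarith) fun i hi => ?_
    have : N ≤ i := by
      by_contra hc
      exact (Finset.disjoint_left.mp ht hi) (Finset.mem_range.mpr (lt_of_not_ge hc))
    exact (hN i this).le
  linarith

/-- Basic properties of the Carlitz exponential: every `d_i` is nonzero with
`|d_i| = q^{i·q^i}`; the series `∑ z^{q^i}/d_i` converges for every `z ∈ C`, defining
`e_C : C → C`; and `e_C` is additive, `𝔽_q`-homogeneous (with `𝔽_q` identified with
`{λ : C | λ^q = λ}`), and satisfies `e_C(θz) = θ e_C(z) + e_C(z)^q`. -/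
theorem carlitz_exponential_properties
    {C : Type*} [NormedField C] [CompleteSpace C] [IsAlgClosed C] [IsUltrametricDist C]
    (p e : ℕ) (hp : p.Prime) (he : 0 < e) [CharP C p]
    (q : ℕ) (hq : q = p ^ e)
    (θ : C) (hθ : ‖θ‖ = (q : ℝ))
    (eC : C → C) (heC : ∀ z : C, eC z = ∑' i : ℕ, z ^ q ^ i / carlitzD q θ i) :
    (∀ i : ℕ, carlitzD q θ i ≠ 0 ∧ ‖carlitzD q θ i‖ = (q : ℝ) ^ (i * q ^ i)) ∧
    (∀ z : C, Summable fun i : ℕ => z ^ q ^ i / carlitzD q θ i) ∧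
    (∀ x y : C, eC (x + y) = eC x + eC y) ∧
    (∀ lam z : C, lam ^ q = lam → eC (lam * z) = lam * eC z) ∧
    (∀ z : C, eC (θ * z) = θ * eC z + eC z ^ q) := by
  haveI : Fact p.Prime := ⟨hp⟩
  have hq2 : 2 ≤ q := by
    rw [hq]
    calc 2 ≤ p := hp.two_le
    _ ≤ p ^ e := Nat.le_self_pow he.ne' p
  have hq1R : (1:ℝ) < (q:ℝ) := by exact_mod_cast hq2.trans_lt' one_lt_two
  have hq0R : (0:ℝ) < (q:ℝ) := by linarith
  -- Part 1: norms of the Carlitz factorials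
  have hnorm : ∀ i : ℕ, ‖carlitzD q θ i‖ = (q : ℝ) ^ (i * q ^ i) := by
    intro i
    induction i with
    | zero => simp [carlitzD]
    | succ n ih =>
      have h1 : ‖θ ^ q ^ (n+1)‖ = (q:ℝ) ^ (q ^ (n+1)) := by rw [norm_pow, hθ]
      have hlt : (q:ℝ) ^ 1 < (q:ℝ) ^ (q ^ (n+1)) := by
        apply pow_lt_pow_right₀ hq1R
        calc 1 < 2 := one_lt_two
        _ ≤ q := hq2
        _ ≤ q ^ (n+1) := Nat.le_self_pow (Nat.succ_ne_zero n) q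
      have hne : ‖θ ^ q ^ (n+1)‖ ≠ ‖θ‖ := by
        rw [h1, hθ]
        rw [pow_one] at hlt
        exact fun hcon => hlt.ne' hcon
      have h2 : ‖θ ^ q ^ (n+1) - θ‖ = (q:ℝ) ^ (q ^ (n+1)) := by
        rw [sub_eq_add_neg,
          IsUltrametricDist.norm_add_eq_max_of_norm_ne_norm (by rwa [norm_neg]),
          norm_neg, h1, hθ]
        rw [max_eq_left]
        calc (q:ℝ) ≤ (q:ℝ)^1 := by norm_num
        _ ≤ (q:ℝ) ^ (q^(n+1)) := hlt.le
      show ‖(θ ^ q ^ (n + 1) - θ) * carlitzD q θ n ^ q‖ = _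
      rw [norm_mul, norm_pow, ih, h2, ← pow_mul, ← pow_add]
      congr 1
      rw [pow_succ]
      ring
  have hdne : ∀ i : ℕ, carlitzD q θ i ≠ 0 := by
    intro i
    rw [← norm_ne_zero_iff, hnorm]
    positivity
  -- Part 2: summability
  have hsum : ∀ z : C, Summable fun i : ℕ => z ^ q ^ i / carlitzD q θ i := by
    intro z
    apply carlitz_summable_aux
    intro ε hε
    obtain ⟨N₁, hN₁⟩ :=
      ((tendsto_pow_atTop_atTop_of_one_lt hq1R).eventually_ge_atTop (2 * ‖z‖)).exists_forall_of_atTop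
    obtain ⟨N₂, hN₂⟩ := exists_pow_lt_of_lt_one hε (by norm_num : (1:ℝ)/2 < 1)
    refine ⟨max N₁ N₂, fun i hi => ?_⟩
    have hi1 : N₁ ≤ i := le_trans (le_max_left _ _) hi
    have hi2 : N₂ ≤ i := le_trans (le_max_right _ _) hi
    have hqi : (0:ℝ) < (q:ℝ) ^ i := by positivity
    have hz : ‖z‖ / (q:ℝ) ^ i ≤ 1/2 := by
      rw [div_le_div_iff₀ hqi (by norm_num)]
      have := hN₁ i hi1
      nlinarith
    have hterm : ‖z ^ q ^ i / carlitzD q θ i‖ = (‖z‖ / (q:ℝ) ^ i) ^ (q ^ i) := by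
      rw [norm_div, norm_pow, hnorm, div_pow, ← pow_mul]
    rw [hterm]
    have hle1 : (‖z‖ / (q:ℝ) ^ i) ^ (q ^ i) ≤ ((1:ℝ)/2) ^ (q ^ i) :=
      pow_le_pow_left₀ (by positivity) hz _
    have hle2 : ((1:ℝ)/2) ^ (q ^ i) ≤ ((1:ℝ)/2) ^ i :=
      pow_le_pow_of_le_one (by norm_num) (by norm_num) (Nat.le_of_lt (Nat.lt_pow_self (n := i) hq2))
    have hle3 : ((1:ℝ)/2) ^ i ≤ ((1:ℝ)/2) ^ N₂ :=
      pow_le_pow_of_le_one (by norm_num) (by norm_num) hi2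
    calc (‖z‖ / (q:ℝ) ^ i) ^ (q ^ i) ≤ ((1:ℝ)/2) ^ N₂ := le_trans hle1 (le_trans hle2 hle3)
    _ < ε := hN₂
  refine ⟨fun i => ⟨hdne i, hnorm i⟩, hsum, ?_, ?_, ?_⟩
  -- Part 3: additivity
  · intro x y
    rw [heC, heC, heC, ← Summable.tsum_add (hsum x) (hsum y)]
    apply tsum_congr
    intro i
    rw [← add_div]
    congr 1
    have hqe : q ^ i = p ^ (e * i) := by rw [hq, ← pow_mul]
    rw [hqe, add_pow_char_pow]
  -- Part 4: homogeneity
  · intro lam z hlam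
    have hl : ∀ i : ℕ, lam ^ q ^ i = lam := by
      intro i
      induction i with
      | zero => simp
      | succ n ih => rw [pow_succ, pow_mul, ih, hlam]
    rw [heC, heC, ← (hsum z).tsum_mul_left lam]
    apply tsum_congr
    intro i
    rw [mul_pow, hl i, mul_div_assoc]
  -- Part 5: functional equation
  · intro z
    -- Frobenius to the e-th power
    have hFract : eC z ^ q = ∑' i : ℕ, (z ^ q ^ i / carlitzD q θ i) ^ q := by
      have hcont : Continuous fun x : C => iterateFrobenius C p e x := by
        simp only [iterateFrobenius_def]
        exact continuous_pow _
      have := (hsum z).map_tsum (iterateFrobenius C p e) hcont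
      rw [heC]
      simp only [Function.comp, iterateFrobenius_def, ← hq] at this ⊢
      exact this
    -- termwise identities
    have hb : Summable fun i : ℕ => θ * (z ^ q ^ i / carlitzD q θ i) := (hsum z).mul_left θ
    have ha := hsum (θ * z)
    have hterm : ∀ i : ℕ, (θ * z) ^ q ^ i / carlitzD q θ i
        = θ * (z ^ q ^ i / carlitzD q θ i)
          + (θ ^ q ^ i - θ) * z ^ q ^ i / carlitzD q θ i := by
      intro i
      rw [mul_pow]
      field_simp
      ring
    have hg : Summable fun i : ℕ => (θ ^ q ^ i - θ) * z ^ q ^ i / carlitzD q θ i := by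
      have := ha.sub hb
      apply this.congr
      intro i
      rw [hterm i]
      ring
    rw [heC (θ * z), tsum_congr hterm, Summable.tsum_add hb hg, (hsum z).tsum_mul_left θ,
      ← heC, hFract]
    congr 1
    -- the shifted series equals the Frobenius series
    rw [Summable.tsum_eq_zero_add hg]
    have h0 : (θ ^ q ^ 0 - θ) * z ^ q ^ 0 / carlitzD q θ 0 = 0 := by simp
    rw [h0, zero_add]
    apply tsum_congr
    intro i
    have hfac : θ ^ q ^ (i+1) - θ ≠ 0 := by
      intro hcon
      apply hdne (i+1)
      show (θ ^ q ^ (i + 1) - θ) * carlitzD q θ i ^ q = 0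
      rw [hcon, zero_mul]
    show (θ ^ q ^ (i+1) - θ) * z ^ q ^ (i+1) / ((θ ^ q ^ (i + 1) - θ) * carlitzD q θ i ^ q) = _
    rw [mul_div_mul_left _ _ hfac, div_pow, ← pow_mul, ← pow_succ]
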